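/- The coproduct Δ on the universal enveloping algebra of the Lie algebra h_1 = span{X,Y} with [Y,X] = X, defined as the algebra homomorphism with Δ(Y) = Y⊗1 + 1⊗Y and Δ(X) = X⊗1 + 1⊗X + δ_1⊗Y together with Δ(δ_1) = δ_1⊗1 + 1⊗δ_1, is coassociative on the generators X, Y, δ_1: (Δ⊗id)∘Δ = (id⊗Δ)∘Δ applied to X, Y, and δ_1. -/

import Mathlib

open scoped TensorProduct

/-- The coproduct `Δ` of `H₁`, the algebra homomorphism determined by
`Δ(Y)=Y⊗1+1⊗Y`, `Δ(δ₁)=δ₁⊗1+1⊗δ₁`, `Δ(X)=X⊗1+1⊗X+δ₁⊗Y`, is coassociative on the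
generators `X`, `Y`, `δ₁`. -/
theorem H1_coassoc_on_generators
    (H : Type*) [Ring H] [Algebra ℂ H]
    (X Y : H) (δ : ℕ+ → H)
    -- defining relations of `H₁`
    (hYX : Y * X - X * Y = X)
    (hXδ : ∀ n : ℕ+, X * δ n - δ n * X = δ (n + 1))
    (hYδ : ∀ n : ℕ+, Y * δ n - δ n * Y = (n : ℂ) • δ n)
    (hδδ : ∀ n m : ℕ+, δ n * δ m = δ m * δ n)
    (Δ : H →ₐ[ℂ] H ⊗[ℂ] H)
    (hΔY : Δ Y = Y ⊗ₜ 1 + 1 ⊗ₜ Y)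
    (hΔδ1 : Δ (δ 1) = δ 1 ⊗ₜ 1 + 1 ⊗ₜ δ 1)
    (hΔX : Δ X = X ⊗ₜ 1 + 1 ⊗ₜ X + δ 1 ⊗ₜ Y) :
    ∀ a ∈ ({X, Y, δ 1} : Set H),
      (Algebra.TensorProduct.assoc ℂ ℂ ℂ H H H)
          ((Algebra.TensorProduct.map Δ (AlgHom.id ℂ H)) (Δ a)) =
        (Algebra.TensorProduct.map (AlgHom.id ℂ H) Δ) (Δ a) := by
  rintro a (rfl|rfl|rfl) <;>
    simp [hΔX, hΔY, hΔδ1, Algebra.TensorProduct.assoc_tmul,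
      TensorProduct.tmul_add, TensorProduct.add_tmul, Algebra.TensorProduct.one_def] <;> abel
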